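/- Let E₁, E₂ be symmetric positive definite k×k matrices, S = E₁⁻¹ + E₂⁻¹, Z = √(E₁⁻¹E₂⁻¹) + (√(E₁⁻¹E₂⁻¹))ᵀ. Then S - Z is positive semidefinite, i.e., S ≽ Z in the Loewner order. -/

import Mathlib

open Matrix

section OldSqrt

open scoped ComplexOrder

/-- The positive semidefinite square root of a positive semidefinite matrix
(the definition of `Matrix.PosSemidef.sqrt` in the older Mathlib, since removed). -/
noncomputable def Matrix.PosSemidef.sqrt {n 𝕜 : Type*} [Fintype n] [DecidableEq n] [RCLike 𝕜]
    {A : Matrix n n 𝕜} (hA : A.PosSemidef) : Matrix n n 𝕜 :=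
  hA.1.eigenvectorUnitary.1 * diagonal ((↑) ∘ (√·) ∘ hA.1.eigenvalues) *
  (star hA.1.eigenvectorUnitary : Matrix n n 𝕜)

end OldSqrt

lemma oldSqrt_isHermitian {n : Type*} [Fintype n] [DecidableEq n]
    {A : Matrix n n ℝ} (hA : A.PosSemidef) : hA.sqrt.IsHermitian := by
  unfold Matrix.PosSemidef.sqrt
  simp only [IsHermitian, conjTranspose_mul, conjTranspose_conjTranspose, star_eq_conjTranspose,
    diagonal_conjTranspose, Matrix.mul_assoc]
  congr 2

lemma oldSqrt_mul_self {n : Type*} [Fintype n] [DecidableEq n]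
    {A : Matrix n n ℝ} (hA : A.PosSemidef) : hA.sqrt * hA.sqrt = A := by
  set C : Matrix n n ℝ := hA.1.eigenvectorUnitary.1
  have hC : star C * C = 1 := Unitary.star_mul_self_of_mem hA.1.eigenvectorUnitary.2
  conv_rhs => rw [hA.1.spectral_theorem]
  unfold Matrix.PosSemidef.sqrt
  simp only [Unitary.conjStarAlgAut_apply]
  change C * _ * star C * (C * _ * star C) = C * _ * star C
  rw [show ∀ X Y : Matrix n n ℝ, C * X * star C * (C * Y * star C) = C * (X * (star C * C) * Y) * star C
    from fun X Y => by simp only [Matrix.mul_assoc], hC, Matrix.mul_one, diagonal_mul_diagonal]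
  congr 2
  ext i j
  simp only [diagonal_apply]
  split_ifs
  · exact Real.mul_self_sqrt (hA.eigenvalues_nonneg i)
  · rfl

/-- The principal square root of `E₁ * E₂` for positive definite `E₁, E₂`:
`E₁^{1/2} · (E₁^{1/2} E₂ E₁^{1/2})^{1/2} · E₁^{-1/2}`. -/
noncomputable def principalSqrtMul {k : ℕ} {E₁ E₂ : Matrix (Fin k) (Fin k) ℝ}
    (h₁ : E₁.PosDef) (h₂ : E₂.PosDef) : Matrix (Fin k) (Fin k) ℝ :=
  h₁.posSemidef.sqrt *
    (h₂.posSemidef.mul_mul_conjTranspose_same h₁.posSemidef.sqrt).sqrt *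
    h₁.posSemidef.sqrt⁻¹

/-- With `S = E₁⁻¹ + E₂⁻¹` and `Z = √(E₁⁻¹E₂⁻¹) + (√(E₁⁻¹E₂⁻¹))ᵀ`, the matrix
`S - Z` is positive semidefinite, i.e. `S ≽ Z` in the Loewner order. -/
theorem S_sub_Z_posSemidef (k : ℕ) (E₁ E₂ : Matrix (Fin k) (Fin k) ℝ)
    (h₁ : E₁.PosDef) (h₂ : E₂.PosDef) :
    ((E₁⁻¹ + E₂⁻¹)
        - (principalSqrtMul h₁.inv h₂.inv + (principalSqrtMul h₁.inv h₂.inv)ᵀ)).PosSemidef := by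
  have hA := h₁.inv
  have hB := h₂.inv
  set A := E₁⁻¹ with hAdef
  set B := E₂⁻¹ with hBdef
  set P := hA.posSemidef.sqrt with hPdef
  set Q := (hB.posSemidef.mul_mul_conjTranspose_same P).sqrt with hQdef
  have hPP : P * P = A := oldSqrt_mul_self hA.posSemidef
  have hQQ : Q * Q = P * B * Pᴴ :=
    oldSqrt_mul_self (hB.posSemidef.mul_mul_conjTranspose_same P)
  have hPH : Pᴴ = P := oldSqrt_isHermitian hA.posSemidef
  have hQH : Qᴴ = Q :=
    oldSqrt_isHermitian (hB.posSemidef.mul_mul_conjTranspose_same P)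
  have hPdet : IsUnit P.det := by
    have h : P.det * P.det = A.det := by rw [← det_mul, hPP]
    have : A.det ≠ 0 := ne_of_gt hA.det_pos
    have hne : P.det ≠ 0 := by
      intro h0
      rw [h0, mul_zero] at h
      exact this h.symm
    exact isUnit_iff_ne_zero.mpr hne
  have hPinv : P * P⁻¹ = 1 := mul_nonsing_inv P hPdet
  have hinvP : P⁻¹ * P = 1 := nonsing_inv_mul P hPdet
  have hPinvH : P⁻¹ᴴ = P⁻¹ := by
    rw [conjTranspose_nonsing_inv, hPH]
  have hM : principalSqrtMul h₁.inv h₂.inv = P * Q * P⁻¹ := rfl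
  have hMT : (principalSqrtMul h₁.inv h₂.inv)ᵀ = P⁻¹ * Q * P := by
    have : (principalSqrtMul h₁.inv h₂.inv)ᴴ = P⁻¹ * Q * P := by
      rw [hM, conjTranspose_mul, conjTranspose_mul, hPH, hQH, hPinvH, mul_assoc]
    rw [← this, conjTranspose]
    ext i j
    simp
  have hBeq : P⁻¹ * Q * (Q * P⁻¹) = B := by
    calc P⁻¹ * Q * (Q * P⁻¹) = P⁻¹ * (Q * Q) * P⁻¹ := by
          simp only [Matrix.mul_assoc]
      _ = (P⁻¹ * P) * B * (P * P⁻¹) := by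
          rw [hQQ, hPH]; simp only [Matrix.mul_assoc]
      _ = B := by rw [hinvP, hPinv, Matrix.one_mul, Matrix.mul_one]
  have key : (A + B) - (principalSqrtMul h₁.inv h₂.inv + (principalSqrtMul h₁.inv h₂.inv)ᵀ)
      = (P - P⁻¹ * Q) * (P - P⁻¹ * Q)ᴴ := by
    have h1 : (P - P⁻¹ * Q)ᴴ = P - Q * P⁻¹ := by
      rw [conjTranspose_sub, conjTranspose_mul, hPH, hQH, hPinvH]
    rw [h1, hMT, hM, Matrix.sub_mul, Matrix.mul_sub, Matrix.mul_sub, hPP, hBeq]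
    rw [Matrix.mul_assoc P Q P⁻¹]
    abel
  rw [key]
  exact posSemidef_self_mul_conjTranspose _
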